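/- For any finite set V of n points in the plane with distinct coordinates in each dimension, there exist linear orders T_x and T_y on V compatible with the x-coordinates and y-coordinates respectively (possibly after reflecting one or both axes), such that for every 0 ≤ k ≤ n, |Sub_k(T_x) ∩ Sub_k(T_y)| ≥ k − n/3, where Sub_k(T) denotes the first k elements of T. -/
import Mathlib

open Finset in
private lemma card_init_aux (n a : ℕ) (ha : a ≤ n) :
    (univ.filter fun i : Fin n => (i:ℕ) < a).card = a := by
  rcases eq_or_lt_of_le ha with rfl | h
  · rw [filter_true_of_mem (fun i _ => i.isLt)]; simp
  · have : (univ.filter fun i : Fin n => (i:ℕ) < a) = Iio ⟨a, h⟩ := by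
      ext i; simp [Fin.lt_def]
    rw [this, Fin.card_Iio]

open Finset in
private lemma card_filter_perm_aux {n : ℕ} (σ : Equiv.Perm (Fin n)) (p : Fin n → Prop)
    [DecidablePred p] :
    (univ.filter fun i => p (σ i)).card = (univ.filter p).card := by
  apply Finset.card_bij (fun a _ => σ a)
  · intro a ha; simp_all
  · intro a ha b hb hab; exact σ.injective hab
  · intro b hb; exact ⟨σ.symm b, by simp_all, by simp⟩

open Finset in
private lemma key_aux {n : ℕ} (p q : Fin n → Prop) [DecidablePred p] [DecidablePred q] :
    (univ.filter fun i => p i ∧ q i).card + (univ.filter fun i => p i ∧ ¬ q i).card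
      = (univ.filter p).card := by
  rw [← filter_filter, ← filter_filter, card_filter_add_card_filter_not]

open Finset in
private lemma core_aux (n : ℕ) (σ : Equiv.Perm (Fin n)) :
    (∀ k ≤ n, ((k:ℝ) - n/3) ≤
      ((univ.filter fun i : Fin n => (i:ℕ) < k ∧ ((σ i : Fin n) : ℕ) < k).card : ℝ)) ∨
    (∀ k ≤ n, ((k:ℝ) - n/3) ≤
      ((univ.filter fun i : Fin n => (i:ℕ) < k ∧ n ≤ k + ((σ i : Fin n) : ℕ)).card : ℝ)) := by
  by_contra hcon
  push_neg at hcon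
  obtain ⟨⟨a, ha, hca⟩, ⟨b, hb, heb⟩⟩ := hcon
  set S1 := univ.filter fun i : Fin n => (i:ℕ) < a ∧ ¬ ((σ i : ℕ) < a) with hS1
  set S2 := univ.filter fun i : Fin n => ((σ i : ℕ) < a) ∧ ¬ ((i:ℕ) < a) with hS2
  set S3 := univ.filter fun i : Fin n => (i:ℕ) < b ∧ ¬ (n ≤ b + (σ i : ℕ)) with hS3
  set S4 := univ.filter fun i : Fin n => (n ≤ b + (σ i : ℕ)) ∧ ¬ ((i:ℕ) < b) with hS4
  have hc1 : (univ.filter fun i : Fin n => (i:ℕ) < a ∧ ((σ i : ℕ) < a)).card + S1.card = a := by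
    rw [key_aux]; exact card_init_aux n a ha
  have hc2 : (univ.filter fun i : Fin n => ((σ i : ℕ) < a) ∧ (i:ℕ) < a).card + S2.card = a := by
    rw [key_aux]
    have hperm : (univ.filter fun i : Fin n => ((σ i : ℕ) < a)).card
        = (univ.filter fun j : Fin n => (j:ℕ) < a).card :=
      card_filter_perm_aux σ (fun j : Fin n => (j:ℕ) < a)
    rw [hperm]; exact card_init_aux n a ha
  have hswap : (univ.filter fun i : Fin n => ((σ i : ℕ) < a) ∧ (i:ℕ) < a)
      = (univ.filter fun i : Fin n => (i:ℕ) < a ∧ ((σ i : ℕ) < a)) := by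
    ext i; simp only [mem_filter]; tauto
  rw [hswap] at hc2
  have hc3 : (univ.filter fun i : Fin n => (i:ℕ) < b ∧ n ≤ b + (σ i : ℕ)).card + S3.card = b := by
    rw [key_aux]; exact card_init_aux n b hb
  have hcb : (univ.filter fun i : Fin n => n ≤ b + (σ i : ℕ)).card = b := by
    have h1 : (univ.filter fun j : Fin n => (j:ℕ) < n - b).card
        + (univ.filter fun j : Fin n => ¬ ((j:ℕ) < n - b)).card = n := by
      rw [card_filter_add_card_filter_not, card_univ, Fintype.card_fin]
    have h2 : (univ.filter fun j : Fin n => ¬ ((j:ℕ) < n - b))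
        = (univ.filter fun j : Fin n => n ≤ b + (j:ℕ)) := by
      ext j; simp only [mem_filter, mem_univ, true_and]
      have := j.isLt; omega
    have hperm : (univ.filter fun i : Fin n => n ≤ b + ((σ i : ℕ))).card
        = (univ.filter fun j : Fin n => n ≤ b + (j:ℕ)).card :=
      card_filter_perm_aux σ (fun j : Fin n => n ≤ b + (j:ℕ))
    rw [hperm, ← h2]
    rw [card_init_aux n (n-b) (by omega)] at h1
    omega
  have hc4 : (univ.filter fun i : Fin n => (n ≤ b + (σ i : ℕ)) ∧ (i:ℕ) < b).card + S4.card = b := by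
    rw [key_aux, hcb]
  have hswap2 : (univ.filter fun i : Fin n => (n ≤ b + (σ i : ℕ)) ∧ (i:ℕ) < b)
      = (univ.filter fun i : Fin n => (i:ℕ) < b ∧ n ≤ b + (σ i : ℕ)) := by
    ext i; simp only [mem_filter]; tauto
  rw [hswap2] at hc4
  have hb1 : (n:ℝ)/3 < S1.card := by
    have h' : (((univ.filter fun i : Fin n => (i:ℕ) < a ∧ ((σ i : ℕ) < a)).card : ℝ)) + S1.card = a := by
      exact_mod_cast congrArg (Nat.cast (R := ℝ)) hc1
    linarith
  have hb2 : (n:ℝ)/3 < S2.card := by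
    have h' : (((univ.filter fun i : Fin n => (i:ℕ) < a ∧ ((σ i : ℕ) < a)).card : ℝ)) + S2.card = a := by
      exact_mod_cast congrArg (Nat.cast (R := ℝ)) hc2
    linarith
  have hb3 : (n:ℝ)/3 < S3.card := by
    have h' : (((univ.filter fun i : Fin n => (i:ℕ) < b ∧ n ≤ b + (σ i : ℕ)).card : ℝ)) + S3.card = b := by
      exact_mod_cast congrArg (Nat.cast (R := ℝ)) hc3
    linarith
  have hb4 : (n:ℝ)/3 < S4.card := by
    have h' : (((univ.filter fun i : Fin n => (i:ℕ) < b ∧ n ≤ b + (σ i : ℕ)).card : ℝ)) + S4.card = b := by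
      exact_mod_cast congrArg (Nat.cast (R := ℝ)) hc4
    linarith
  have tri : ∀ X Y Z : Finset (Fin n), Disjoint X Y → Disjoint X Z → Disjoint Y Z →
      (n:ℝ)/3 < X.card → (n:ℝ)/3 < Y.card → (n:ℝ)/3 < Z.card → False := by
    intro X Y Z dXY dXZ dYZ h1 h2 h3
    have hsum : X.card + Y.card + Z.card ≤ n := by
      have e1 : (X ∪ Y ∪ Z).card = X.card + Y.card + Z.card := by
        rw [card_union_of_disjoint, card_union_of_disjoint dXY]
        rw [disjoint_union_left]; exact ⟨dXZ, dYZ⟩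
      calc X.card + Y.card + Z.card = (X ∪ Y ∪ Z).card := e1.symm
        _ ≤ Fintype.card (Fin n) := card_le_univ _
        _ = n := Fintype.card_fin n
    have : ((X.card + Y.card + Z.card : ℕ) : ℝ) ≤ n := by exact_mod_cast Nat.cast_le.mpr hsum
    push_cast at this; linarith
  rcases le_total a b with hab | hab <;> rcases le_total (a + b) n with hnab | hnab
  · refine tri S1 S2 S4 ?_ ?_ ?_ hb1 hb2 hb4 <;>
      (rw [disjoint_left]; intro i hi hj;
       simp only [hS1, hS2, hS4, mem_filter, mem_univ, true_and] at hi hj; omega)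
  · refine tri S1 S3 S4 ?_ ?_ ?_ hb1 hb3 hb4 <;>
      (rw [disjoint_left]; intro i hi hj;
       simp only [hS1, hS3, hS4, mem_filter, mem_univ, true_and] at hi hj; omega)
  · refine tri S2 S3 S4 ?_ ?_ ?_ hb2 hb3 hb4 <;>
      (rw [disjoint_left]; intro i hi hj;
       simp only [hS2, hS3, hS4, mem_filter, mem_univ, true_and] at hi hj; omega)
  · refine tri S1 S2 S3 ?_ ?_ ?_ hb1 hb2 hb3 <;>
      (rw [disjoint_left]; intro i hi hj;
       simp only [hS1, hS2, hS3, mem_filter, mem_univ, true_and] at hi hj; omega)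

/-- The set of the first `k` elements of the linear order on `Fin n`
represented by the listing `T : Fin n ≃ Fin n`. -/
def prefixSet {n : ℕ} (k : ℕ) (T : Fin n ≃ Fin n) : Finset (Fin n) :=
  (Finset.univ.filter fun i : Fin n => (i : ℕ) < k).image T

open Finset in
private lemma mem_prefixSet_aux {n k : ℕ} (T : Fin n ≃ Fin n) (p : Fin n) :
    p ∈ prefixSet k T ↔ ((T.symm p : ℕ) < k) := by
  simp only [prefixSet, mem_image, mem_filter, mem_univ, true_and]
  constructor
  · rintro ⟨i, hi, rfl⟩; simpa using hi
  · intro h; exact ⟨T.symm p, h, by simp⟩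

open Finset in
theorem stmt_8 (n : ℕ) (V : Fin n → ℝ × ℝ)
    (hx : ∀ i j : Fin n, i ≠ j → (V i).1 ≠ (V j).1)
    (hy : ∀ i j : Fin n, i ≠ j → (V i).2 ≠ (V j).2) :
    ∃ Tx Ty : Fin n ≃ Fin n,
      ((∀ i j : Fin n, i < j → (V (Tx i)).1 < (V (Tx j)).1) ∨
        (∀ i j : Fin n, i < j → (V (Tx j)).1 < (V (Tx i)).1)) ∧
      ((∀ i j : Fin n, i < j → (V (Ty i)).2 < (V (Ty j)).2) ∨
        (∀ i j : Fin n, i < j → (V (Ty j)).2 < (V (Ty i)).2)) ∧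
      ∀ k : ℕ, k ≤ n →
        ((k : ℝ) - (n : ℝ) / 3) ≤ ((prefixSet k Tx ∩ prefixSet k Ty).card : ℝ) := by
  set f : Fin n → ℝ := fun i => (V i).1 with hf
  set g : Fin n → ℝ := fun i => (V i).2 with hg
  have hfinj : Function.Injective f := by
    intro i j h; by_contra hne; exact hx i j hne h
  have hginj : Function.Injective g := by
    intro i j h; by_contra hne; exact hy i j hne h
  set Tx := Tuple.sort f with hTx
  set Ty := Tuple.sort g with hTy
  have hxmono : StrictMono (f ∘ Tx) :=
    (Tuple.monotone_sort f).strictMono_of_injective (hfinj.comp Tx.injective)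
  have hymono : StrictMono (g ∘ Ty) :=
    (Tuple.monotone_sort g).strictMono_of_injective (hginj.comp Ty.injective)
  set σ : Equiv.Perm (Fin n) := Tx.trans Ty.symm with hσ
  have hset1 : ∀ k : ℕ, prefixSet k Tx ∩ prefixSet k (Ty : Fin n ≃ Fin n)
      = (univ.filter fun i : Fin n => (i:ℕ) < k ∧ ((σ i : ℕ) < k)).image Tx := by
    intro k; ext p
    simp only [mem_inter, mem_prefixSet_aux, mem_image, mem_filter, mem_univ, true_and]
    constructor
    · rintro ⟨h1, h2⟩
      exact ⟨Tx.symm p, ⟨h1, by simpa [hσ] using h2⟩, by simp⟩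
    · rintro ⟨i, ⟨h1, h2⟩, rfl⟩
      exact ⟨by simpa using h1, by simpa [hσ] using h2⟩
  set Ty' : Fin n ≃ Fin n := (Fin.revPerm : Equiv.Perm (Fin n)).trans Ty with hTy'
  have hrev : ∀ i j : Fin n, i < j → g (Ty' j) < g (Ty' i) := by
    intro i j hij
    have : j.rev < i.rev := by rwa [Fin.rev_lt_rev]
    simpa [hTy'] using hymono this
  have hset2 : ∀ k : ℕ, prefixSet k Tx ∩ prefixSet k Ty'
      = (univ.filter fun i : Fin n => (i:ℕ) < k ∧ n ≤ k + (σ i : ℕ)).image Tx := by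
    intro k; ext p
    simp only [mem_inter, mem_prefixSet_aux, mem_image, mem_filter, mem_univ, true_and]
    have hsymm : (Ty'.symm p : ℕ) = n - 1 - (Ty.symm p : ℕ) := by
      simp [hTy', Fin.val_rev]; omega
    constructor
    · rintro ⟨h1, h2⟩
      refine ⟨Tx.symm p, ⟨h1, ?_⟩, by simp⟩
      rw [hsymm] at h2
      have := (Ty.symm p).isLt
      simp only [hσ, Equiv.trans_apply, Equiv.apply_symm_apply]
      omega
    · rintro ⟨i, ⟨h1, h2⟩, rfl⟩
      refine ⟨by simpa using h1, ?_⟩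
      rw [hsymm]
      simp only [hσ, Equiv.trans_apply] at h2
      have := (Ty.symm (Tx i)).isLt
      omega
  rcases core_aux n σ with hcase | hcase
  · refine ⟨Tx, Ty, Or.inl (fun i j hij => hxmono hij), Or.inl (fun i j hij => hymono hij), ?_⟩
    intro k hk
    rw [hset1 k, card_image_of_injective _ Tx.injective]
    exact hcase k hk
  · refine ⟨Tx, Ty', Or.inl (fun i j hij => hxmono hij), Or.inr hrev, ?_⟩
    intro k hk
    rw [hset2 k, card_image_of_injective _ Tx.injective]
    exact hcase k hk
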